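/- Let w ∈ ℝ^l be a vector whose coordinates are real algebraic numbers linearly independent over ℚ. Then there exist constants c₁ > 0 and c₂ > 0 such that |⟨z, w⟩| ≥ c₁ ‖z‖^(−c₂) for all nonzero integer vectors z ∈ ℤ^l. -/

import Mathlib

noncomputable def Complex.abs : AbsoluteValue ℂ ℝ where
  toFun z := ‖z‖
  map_mul' := norm_mul
  nonneg' := norm_nonneg
  eq_zero' _ := norm_eq_zero
  add_le' := norm_add_le

theorem Complex.abs_ofReal (r : ℝ) : Complex.abs (r : ℂ) = |r| := by
  show ‖(r : ℂ)‖ = |r|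
  simp

set_option maxHeartbeats 1000000 in
/-- Diophantine property of algebraic numbers: if the coordinates of
`w ∈ ℝ^l` are real algebraic numbers linearly independent over `ℚ`, then there are
`c₁, c₂ > 0` such that `|⟨z, w⟩| ≥ c₁ ‖z‖^(−c₂)` for all nonzero `z ∈ ℤ^l`. -/
theorem diophantine_property_of_algebraic_vectors
    (l : ℕ) (w : Fin l → ℝ)
    (halg : ∀ i, IsAlgebraic ℚ (w i))
    (hindep : ∀ c : Fin l → ℚ, (∑ i, (c i : ℝ) * w i) = 0 → c = 0) :
    ∃ c₁ > (0 : ℝ), ∃ c₂ > (0 : ℝ), ∀ z : Fin l → ℤ, z ≠ 0 →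
      c₁ * ‖(fun i => (z i : ℝ))‖ ^ (-c₂) ≤ |∑ i, (z i : ℝ) * w i| := by
  classical
  set K := IntermediateField.adjoin ℚ (Set.range w) with hK
  haveI : Finite (Set.range w) := Set.finite_range w
  haveI : FiniteDimensional ℚ K :=
    IntermediateField.finiteDimensional_adjoin (fun x hx => by
      obtain ⟨i, rfl⟩ := hx; exact (halg i).isIntegral)
  have hw' : ∀ i, w i ∈ K := fun i =>
    IntermediateField.subset_adjoin ℚ _ ⟨i, rfl⟩
  set w' : Fin l → K := fun i => ⟨w i, hw' i⟩ with hw'def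
  -- integral multiplier
  obtain ⟨m, hm0, hm⟩ := exists_integral_multiples ℤ ℚ (L := K) (Finset.univ.image w')
  have hmint : ∀ i, IsIntegral ℤ (m • w' i) := fun i =>
    hm _ (Finset.mem_image_of_mem _ (Finset.mem_univ i))
  -- the distinguished real embedding
  set σ₀ : K →ₐ[ℚ] ℂ := (Complex.ofRealHom.comp (algebraMap K ℝ)).toRatAlgHom with hσ₀
  set N := Fintype.card (K →ₐ[ℚ] ℂ) with hN
  have hNpos : 0 < N := Fintype.card_pos_iff.mpr ⟨σ₀⟩
  -- uniform bound on embedded coordinates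
  set B : ℝ := 1 + ∑ σ : K →ₐ[ℚ] ℂ, ∑ i, Complex.abs (σ (m • w' i)) with hBdef
  have hB1 : (1 : ℝ) ≤ B := by
    have : (0:ℝ) ≤ ∑ σ : K →ₐ[ℚ] ℂ, ∑ i, Complex.abs (σ (m • w' i)) := by positivity
    linarith
  have hB : ∀ (σ : K →ₐ[ℚ] ℂ) i, Complex.abs (σ (m • w' i)) ≤ B := by
    intro σ i
    have h1 : Complex.abs (σ (m • w' i)) ≤ ∑ j, Complex.abs (σ (m • w' j)) :=
      Finset.single_le_sum (f := fun j => Complex.abs (σ (m • w' j)))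
        (fun j _ => AbsoluteValue.nonneg _ _) (Finset.mem_univ i)
    have h2 : ∑ j, Complex.abs (σ (m • w' j)) ≤
        ∑ τ : K →ₐ[ℚ] ℂ, ∑ i, Complex.abs (τ (m • w' i)) :=
      Finset.single_le_sum (f := fun τ : K →ₐ[ℚ] ℂ => ∑ i, Complex.abs (τ (m • w' i)))
        (fun τ _ => Finset.sum_nonneg fun j _ => AbsoluteValue.nonneg _ _) (Finset.mem_univ σ)
    linarith
  set C : ℝ := (l + 1) * B with hCdef
  have hC1 : (1 : ℝ) ≤ C := by
    have h0 : (0:ℝ) ≤ (l:ℝ) := Nat.cast_nonneg l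
    nlinarith
  have hmR : (0:ℝ) < |(m:ℝ)| := by
    simpa using abs_pos.mpr (Int.cast_ne_zero (α := ℝ) |>.mpr hm0)
  refine ⟨(|(m:ℝ)| * C ^ N)⁻¹, by positivity, (N : ℝ), by exact_mod_cast hNpos, ?_⟩
  intro z hz
  set Z : ℝ := ‖(fun i => (z i : ℝ))‖ with hZdef
  have hZ1 : (1:ℝ) ≤ Z := by
    obtain ⟨i, hi⟩ := Function.ne_iff.mp hz
    have h1 : (1:ℝ) ≤ |(z i : ℝ)| := by
      exact_mod_cast Int.one_le_abs (by simpa using hi)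
    have h2 : |(z i : ℝ)| ≤ Z := by
      simpa [Real.norm_eq_abs] using norm_le_pi_norm (fun i => (z i : ℝ)) i
    linarith
  have hZle : ∀ i, |(z i : ℝ)| ≤ Z := fun i => by
    simpa [Real.norm_eq_abs] using norm_le_pi_norm (fun i => (z i : ℝ)) i
  set S : ℝ := ∑ i, (z i : ℝ) * w i with hSdef
  set x : K := ∑ i, (z i : K) * (m • w' i) with hxdef
  have hx_real : (x : ℝ) = (m : ℝ) * S := by
    rw [hxdef, hSdef]
    push_cast
    rw [Finset.mul_sum]
    congr 1; ext i
    have h : ((w' i : K) : ℝ) = w i := rfl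
    push_cast [h, zsmul_eq_mul]
    ring
  have hx_int : IsIntegral ℤ x := by
    refine IsIntegral.sum _ fun i _ => ?_
    have : ((z i : K)) = algebraMap ℤ K (z i) := by simp
    rw [this]
    exact (isIntegral_algebraMap).mul (hmint i)
  have hS0 : S ≠ 0 := by
    intro h0
    apply hz
    have := hindep (fun i => (z i : ℚ)) (by push_cast; exact h0)
    funext i
    have h2 : ((z i : ℚ)) = 0 := by simpa using congrFun this i
    have h3 : z i = 0 := by exact_mod_cast h2
    simpa using h3
  have hx0 : x ≠ 0 := by
    intro h
    apply hS0
    have : ((x : K) : ℝ) = 0 := by rw [h]; simp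
    rw [hx_real] at this
    rcases mul_eq_zero.mp this with h' | h'
    · exact absurd (by exact_mod_cast h') hm0
    · exact h'
  -- norm is a nonzero rational integer
  set q : ℚ := Algebra.norm ℚ x with hq
  have hq0 : q ≠ 0 := Algebra.norm_ne_zero_iff.mpr hx0
  have hq_int : IsIntegral ℤ q := Algebra.isIntegral_norm ℚ hx_int
  obtain ⟨n, hn⟩ := IsIntegrallyClosed.isIntegral_iff.mp hq_int
  have h1q : (1:ℝ) ≤ |(q:ℝ)| := by
    have hn0 : n ≠ 0 := by rintro rfl; apply hq0; rw [← hn]; simp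
    have hn' : ((n:ℚ)) = q := by rw [← hn]; simp
    have h4 : (1:ℚ) ≤ |q| := by
      rw [← hn']
      exact_mod_cast Int.one_le_abs hn0
    exact_mod_cast h4
  -- product formula over embeddings
  have hprod : |(q:ℝ)| = ∏ σ : K →ₐ[ℚ] ℂ, Complex.abs (σ x) := by
    have h := Algebra.norm_eq_prod_embeddings ℚ (E := ℂ) x
    have h2 := congrArg Complex.abs h
    rw [map_prod] at h2
    rw [← h2]
    have h3 : (algebraMap ℚ ℂ) q = ((q:ℝ) : ℂ) := by rw [eq_ratCast]; norm_cast
    rw [h3, Complex.abs_ofReal]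
  -- bound each embedding
  have hσbound : ∀ σ : K →ₐ[ℚ] ℂ, Complex.abs (σ x) ≤ C * Z := by
    intro σ
    have hmap : σ x = ∑ i, (z i : ℂ) * σ (m • w' i) := by
      rw [hxdef, map_sum]
      congr 1; ext i
      rw [map_mul, map_intCast]
    calc Complex.abs (σ x) ≤ ∑ i, Complex.abs ((z i : ℂ) * σ (m • w' i)) := by
          rw [hmap]; exact AbsoluteValue.sum_le _ _ _
      _ = ∑ i, |(z i : ℝ)| * Complex.abs (σ (m • w' i)) := by
          congr 1; ext i
          rw [map_mul]
          congr 1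
          rw [show ((z i : ℂ)) = (((z i : ℝ)) : ℂ) by push_cast; ring, Complex.abs_ofReal]
      _ ≤ ∑ _i : Fin l, Z * B := Finset.sum_le_sum fun i _ =>
          mul_le_mul (hZle i) (hB σ i) (AbsoluteValue.nonneg _ _) (by linarith)
      _ = (l:ℝ) * (Z * B) := by simp [Finset.sum_const, mul_comm]
      _ ≤ C * Z := by rw [hCdef]; nlinarith
  -- split off σ₀
  have habs0 : Complex.abs (σ₀ x) = |(x : ℝ)| := by
    rw [hσ₀]
    have : (Complex.ofRealHom.comp (algebraMap K ℝ)).toRatAlgHom x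
        = (((x : K) : ℝ) : ℂ) := rfl
    rw [this, Complex.abs_ofReal]
  have hCZ1 : (1:ℝ) ≤ C * Z := by nlinarith
  have hrest : ∏ σ ∈ Finset.univ.erase σ₀, Complex.abs (σ x) ≤ (C * Z) ^ N := by
    calc ∏ σ ∈ Finset.univ.erase σ₀, Complex.abs (σ x)
        ≤ ∏ _σ ∈ Finset.univ.erase σ₀, (C * Z) :=
          Finset.prod_le_prod (fun σ _ => AbsoluteValue.nonneg _ _) (fun σ _ => hσbound σ)
      _ = (C * Z) ^ (Finset.univ.erase σ₀).card := Finset.prod_const _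
      _ ≤ (C * Z) ^ N := by
          apply pow_le_pow_right₀ (by linarith)
          calc (Finset.univ.erase σ₀).card ≤ Finset.univ.card := Finset.card_erase_le
            _ = N := rfl
  have hkey : (1:ℝ) ≤ |(x : ℝ)| * (C * Z) ^ N := by
    calc (1:ℝ) ≤ |(q:ℝ)| := h1q
      _ = ∏ σ : K →ₐ[ℚ] ℂ, Complex.abs (σ x) := hprod
      _ = Complex.abs (σ₀ x) * ∏ σ ∈ Finset.univ.erase σ₀, Complex.abs (σ x) :=
          (Finset.mul_prod_erase _ _ (Finset.mem_univ σ₀)).symm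
      _ = |(x : ℝ)| * ∏ σ ∈ Finset.univ.erase σ₀, Complex.abs (σ x) := by rw [habs0]
      _ ≤ |(x : ℝ)| * (C * Z) ^ N := by
          apply mul_le_mul_of_nonneg_left hrest (abs_nonneg _)
  -- conclude
  have hxabs : |(x : ℝ)| = |(m:ℝ)| * |S| := by rw [hx_real, abs_mul]
  have hP : (0:ℝ) < |(m:ℝ)| * C ^ N * Z ^ N :=
    mul_pos (mul_pos hmR (pow_pos (by linarith) N)) (pow_pos (by linarith) N)
  rw [Real.rpow_neg (by linarith), Real.rpow_natCast]
  rw [hxabs, mul_pow] at hkey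
  calc (|(m:ℝ)| * C ^ N)⁻¹ * (Z ^ N)⁻¹
      = (|(m:ℝ)| * C ^ N * Z ^ N)⁻¹ := (mul_inv _ _).symm
    _ ≤ |S| := by
        rw [inv_le_iff_one_le_mul₀ hP]
        nlinarith [abs_nonneg S]
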